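/- Let X ⊆ ℝ^d be a finite set of n points, let k ≥ 1 and let z be an integer with 1 ≤ z < n, and let η ≥ 1. Fix an optimal solution of k-means with z outliers on X: an inlier set Y* ⊆ X with |Y*| = n−z partitioned into clusters A_1, …, A_k (each point assigned to its nearest optimal center), achieving cost ρ*. Run Algorithm 1 (thresholded D² sampling), and for each i ≥ 1 let H_i denote the union of the 'covered' clusters, i.e., those A_j with A_j ∩ S_i ≠ ∅. Then for every i ≥ 1, E[ ∑_{x∈H_i} min{ φ_{{x}}(S_i), η·ρ_X(S_i)/z } ] ≤ 64·ρ*. -/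

import Mathlib

open Finset

open scoped Classical

/-- `phiPt x S` is the squared distance from `x` to its nearest center in `S`,
i.e. `min_{s ∈ S} ‖x - s‖²`. -/
noncomputable def phiPt {d : ℕ} (x : EuclideanSpace ℝ (Fin d))
    (S : Finset (EuclideanSpace ℝ (Fin d))) : ℝ :=
  sInf ((fun s => ‖x - s‖ ^ 2) '' (S : Set (EuclideanSpace ℝ (Fin d))))

/-- `phi A S = ∑_{x ∈ A} min_{s ∈ S} ‖x - s‖²`, the `k`-means cost of centers `S` on `A`. -/
noncomputable def phi {d : ℕ} (A S : Finset (EuclideanSpace ℝ (Fin d))) : ℝ :=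
  ∑ x ∈ A, phiPt x S

/-- The mean (centroid) of a finite set of points. -/
noncomputable def mean {d : ℕ} (A : Finset (EuclideanSpace ℝ (Fin d))) :
    EuclideanSpace ℝ (Fin d) :=
  (A.card : ℝ)⁻¹ • ∑ x ∈ A, x

/-- `rho X S z` is the cost of the centers `S` on `X` after discarding the `z`
points of `X` farthest from `S`: the minimum of `phi Y S` over `Y ⊆ X` with
`|Y| = |X| - z`. -/
noncomputable def rho {d : ℕ} (X S : Finset (EuclideanSpace ℝ (Fin d))) (z : ℕ) : ℝ :=
  sInf ((fun Y : Finset (EuclideanSpace ℝ (Fin d)) => phi Y S) ''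
    {Y : Finset (EuclideanSpace ℝ (Fin d)) | Y ⊆ X ∧ Y.card = X.card - z})

/-- `optCost X k z` is the optimal cost of `k`-means with `z` outliers on `X`:
the infimum of `rho X C z` over all center sets `C ⊆ ℝ^d` with `|C| = k`. -/
noncomputable def optCost {d : ℕ} (X : Finset (EuclideanSpace ℝ (Fin d))) (k z : ℕ) : ℝ :=
  sInf ((fun C : Finset (EuclideanSpace ℝ (Fin d)) => rho X C z) ''
    {C : Finset (EuclideanSpace ℝ (Fin d)) | C.card = k})

/-- `IsAlg1Kernel X z η q` says that `q S ·` is, for each already-sampled set `S`, the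
probability distribution on `X` from which Algorithm 1 (thresholded `D²` sampling with
parameter `η`) draws its next point: the first point is uniform on `X`, and when
`ρ_X(S) > 0` a point `x ∈ X` is drawn with probability proportional to
`min{φ_{{x}}(S), η·ρ_X(S)/z}` (when `ρ_X(S) = 0` any distribution on `X` is allowed,
since the cost is already zero). -/
def IsAlg1Kernel {d : ℕ} (X : Finset (EuclideanSpace ℝ (Fin d))) (z : ℕ) (η : ℝ)
    (q : Finset (EuclideanSpace ℝ (Fin d)) → EuclideanSpace ℝ (Fin d) → ℝ) : Prop :=
  (∀ S x, 0 ≤ q S x) ∧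
  (∀ S, ∑ x ∈ X, q S x = 1) ∧
  (∀ x ∈ X, q ∅ x = 1 / X.card) ∧
  (∀ S : Finset (EuclideanSpace ℝ (Fin d)), S.Nonempty → 0 < rho X S z →
    ∀ x ∈ X, q S x =
      min (phiPt x S) (η * rho X S z / z) /
        ∑ y ∈ X, min (phiPt y S) (η * rho X S z / z))

/-- For a sampled sequence `xs` of points, `algSet xs i` is the set `S_i` of the first
`i` sampled points (so `algSet xs 0 = ∅` and `algSet xs t = S_t` is the output). -/
noncomputable def algSet {d t : ℕ} (xs : Fin t → EuclideanSpace ℝ (Fin d)) (i : ℕ) :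
    Finset (EuclideanSpace ℝ (Fin d)) :=
  (Finset.univ.filter (fun j : Fin t => (j : ℕ) < i)).image xs

/-- The probability that Algorithm 1 (with step distributions `q`) samples exactly the
sequence `xs`: the product over steps `i` of the probability of drawing `xs i` given the
previously sampled set `S_i`. -/
noncomputable def algWeight {d t : ℕ}
    (q : Finset (EuclideanSpace ℝ (Fin d)) → EuclideanSpace ℝ (Fin d) → ℝ)
    (xs : Fin t → EuclideanSpace ℝ (Fin d)) : ℝ :=
  ∏ i : Fin t, q (algSet xs (i : ℕ)) (xs i)

variable {d : ℕ}

abbrev E (d : ℕ) := EuclideanSpace ℝ (Fin d)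

lemma phiPt_nonneg (x : E d) (S : Finset (E d)) : 0 ≤ phiPt x S := by
  apply Real.sInf_nonneg
  rintro v ⟨s, -, rfl⟩
  positivity

lemma phiPt_le {x s : E d} {S : Finset (E d)} (hs : s ∈ S) : phiPt x S ≤ ‖x - s‖ ^ 2 := by
  have hbdd : BddBelow ((fun s => ‖x - s‖ ^ 2) '' (S : Set (E d))) := by
    refine ⟨0, ?_⟩
    rintro v ⟨t, -, rfl⟩
    positivity
  exact csInf_le hbdd ⟨s, by simpa using hs, rfl⟩

lemma phiPt_exists {x : E d} {S : Finset (E d)} (hS : S.Nonempty) :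
    ∃ s ∈ S, phiPt x S = ‖x - s‖ ^ 2 := by
  obtain ⟨s, hs, hmin⟩ := S.exists_min_image (fun s => ‖x - s‖ ^ 2) hS
  refine ⟨s, hs, le_antisymm (phiPt_le hs) ?_⟩
  refine le_csInf ⟨‖x - s‖ ^ 2, ⟨s, by simpa using hs, rfl⟩⟩ ?_
  rintro v ⟨t, ht, rfl⟩
  exact hmin t (by simpa using ht)

lemma phiPt_mono {S S' : Finset (E d)} (h : S ⊆ S') (hS : S.Nonempty) (x : E d) :
    phiPt x S' ≤ phiPt x S := by
  obtain ⟨s, hs, he⟩ := phiPt_exists (x := x) hS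
  rw [he]; exact phiPt_le (h hs)

lemma sq_norm_triangle (a b c : E d) : ‖a - b‖ ^ 2 ≤ 2 * ‖a - c‖ ^ 2 + 2 * ‖c - b‖ ^ 2 := by
  have h : ‖a - b‖ ≤ ‖a - c‖ + ‖c - b‖ := by
    simpa using norm_add_le (a - c) (c - b)
  nlinarith [norm_nonneg (a - b), norm_nonneg (a - c), norm_nonneg (c - b),
    sq_nonneg (‖a - c‖ - ‖c - b‖)]

lemma phiPt_triangle {S : Finset (E d)} (hS : S.Nonempty) (x y : E d) :
    phiPt y S ≤ 2 * ‖y - x‖ ^ 2 + 2 * phiPt x S := by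
  obtain ⟨s, hs, he⟩ := phiPt_exists (x := x) hS
  calc phiPt y S ≤ ‖y - s‖ ^ 2 := phiPt_le hs
  _ ≤ 2 * ‖y - x‖ ^ 2 + 2 * ‖x - s‖ ^ 2 := sq_norm_triangle _ _ _
  _ = 2 * ‖y - x‖ ^ 2 + 2 * phiPt x S := by rw [he]

lemma min_add_le {a b c : ℝ} (ha : 0 ≤ a) (hb : 0 ≤ b) (hc : 0 ≤ c) :
    min a (b + c) ≤ min a b + min a c := by
  rcases le_total a b with h | h <;> rcases le_total a c with h2 | h2 <;>
    simp [min_def] <;> split_ifs <;> linarith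

lemma phi_nonneg (A S : Finset (E d)) : 0 ≤ phi A S :=
  Finset.sum_nonneg fun x _ => phiPt_nonneg x S

lemma rhoSet_nonempty (X : Finset (E d)) (S : Finset (E d)) (z : ℕ) :
    ((fun Y : Finset (E d) => phi Y S) ''
      {Y : Finset (E d) | Y ⊆ X ∧ Y.card = X.card - z}).Nonempty := by
  obtain ⟨Y, hY, hc⟩ := Finset.exists_subset_card_eq (s := X) (Nat.sub_le (X.card) z)
  exact ⟨phi Y S, Y, ⟨hY, hc⟩, rfl⟩

lemma rho_nonneg (X S : Finset (E d)) (z : ℕ) : 0 ≤ rho X S z := by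
  apply Real.sInf_nonneg
  rintro v ⟨Y, -, rfl⟩
  exact phi_nonneg Y S

lemma rho_mono (X : Finset (E d)) {S S' : Finset (E d)} (h : S ⊆ S') (hS : S.Nonempty)
    (z : ℕ) : rho X S' z ≤ rho X S z := by
  refine le_csInf (rhoSet_nonempty X S z) ?_
  rintro v ⟨Y, hY, rfl⟩
  have h1 : rho X S' z ≤ phi Y S' := by
    have hbdd : BddBelow ((fun Y : Finset (E d) => phi Y S') ''
        {Y : Finset (E d) | Y ⊆ X ∧ Y.card = X.card - z}) := by
      refine ⟨0, ?_⟩; rintro v ⟨Z, -, rfl⟩; exact phi_nonneg Z S'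
    exact csInf_le hbdd ⟨Y, hY, rfl⟩
  refine h1.trans (Finset.sum_le_sum fun x _ => phiPt_mono h hS x)

lemma min_two_mul {u T : ℝ} (hT : 0 ≤ T) : min (2*u) T ≤ 2 * min u T := by
  rcases le_total u T with h | h
  · simp [min_eq_left h]
  · calc min (2*u) T ≤ T := min_le_right _ _
    _ ≤ 2 * T := by linarith
    _ = 2 * min u T := by rw [min_eq_right h]

lemma min_add_le' {a b c : ℝ} (ha : 0 ≤ a) (hb : 0 ≤ b) (hc : 0 ≤ c) :
    min (b + c) a ≤ min b a + min c a := by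
  rw [min_comm _ a, min_comm b a, min_comm c a]; exact min_add_le ha hb hc

lemma clusterLemma {S A : Finset (E d)} (hS : S.Nonempty) (c : E d) {T : ℝ} (hT : 0 ≤ T) :
    ∑ x ∈ A, (min (phiPt x S) T) *
      (∑ y ∈ A, min (min (phiPt y S) T) (min (‖y - x‖ ^ 2) T))
    ≤ 64 * (∑ y ∈ A, ‖y - c‖ ^ 2) * ∑ x ∈ A, min (phiPt x S) T := by
  set w : E d → ℝ := fun x => min (phiPt x S) T with hw
  set m : E d → ℝ := fun x => min (‖x - c‖ ^ 2) T with hm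
  have hw0 : ∀ x, 0 ≤ w x := fun x => le_min (phiPt_nonneg x S) hT
  have hm0 : ∀ x, 0 ≤ m x := fun x => le_min (by positivity) hT
  have hmA : ∀ x, m x ≤ ‖x - c‖ ^ 2 := fun x => min_le_left _ _
  set W := ∑ x ∈ A, w x with hW
  set P := ∑ x ∈ A, m x with hP
  set R := ∑ y ∈ A, ‖y - c‖ ^ 2 with hR
  have hW0 : 0 ≤ W := Finset.sum_nonneg fun x _ => hw0 x
  have hP0 : 0 ≤ P := Finset.sum_nonneg fun x _ => hm0 x
  have hPR : P ≤ R := Finset.sum_le_sum fun x _ => hmA x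
  have hR0 : 0 ≤ R := Finset.sum_nonneg fun x _ => by positivity
  have key1 : ∀ x y : E d, min (‖y - x‖ ^ 2) T ≤ 2 * m x + 2 * m y := by
    intro x y
    have h1 : ‖y - x‖ ^ 2 ≤ 2 * ‖y - c‖ ^ 2 + 2 * ‖x - c‖ ^ 2 := by
      have := sq_norm_triangle y x c
      rwa [norm_sub_rev c x] at this
    calc min (‖y - x‖ ^ 2) T ≤ min (2 * ‖y - c‖ ^ 2 + 2 * ‖x - c‖ ^ 2) T :=
          min_le_min h1 (le_refl T)
    _ ≤ min (2 * ‖y - c‖ ^ 2) T + min (2 * ‖x - c‖ ^ 2) T :=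
          min_add_le' hT (by positivity) (by positivity)
    _ ≤ 2 * m y + 2 * m x := add_le_add (min_two_mul hT) (min_two_mul hT)
    _ = 2 * m x + 2 * m y := by ring
  -- inner sum bound
  set Ex : E d → ℝ := fun x => ∑ y ∈ A, min (w y) (2 * m x) with hEx
  have key2 : ∀ x : E d, (∑ y ∈ A, min (w y) (min (‖y - x‖ ^ 2) T)) ≤ Ex x + 2 * P := by
    intro x
    have : ∀ y ∈ A, min (w y) (min (‖y - x‖ ^ 2) T) ≤ min (w y) (2 * m x) + 2 * m y := by
      intro y _
      calc min (w y) (min (‖y - x‖ ^ 2) T) ≤ min (w y) (2 * m x + 2 * m y) :=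
            min_le_min (le_refl _) (key1 x y)
      _ ≤ min (w y) (2 * m x) + min (w y) (2 * m y) :=
            min_add_le (hw0 y) (by nlinarith [hm0 x]) (by nlinarith [hm0 y])
      _ ≤ min (w y) (2 * m x) + 2 * m y := add_le_add le_rfl (min_le_right _ _)
    calc (∑ y ∈ A, min (w y) (min (‖y - x‖ ^ 2) T))
        ≤ ∑ y ∈ A, (min (w y) (2 * m x) + 2 * m y) := Finset.sum_le_sum this
    _ = Ex x + 2 * P := by rw [Finset.sum_add_distrib, hEx, hP, Finset.mul_sum]
  have hEx0 : ∀ x, 0 ≤ Ex x := fun x =>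
    Finset.sum_nonneg fun y _ => le_min (hw0 y) (by nlinarith [hm0 x])
  have hExW : ∀ x, Ex x ≤ W := fun x =>
    Finset.sum_le_sum fun y _ => min_le_left _ _
  have hExm : ∀ x, Ex x ≤ (A.card : ℝ) * (2 * m x) := by
    intro x
    calc Ex x ≤ ∑ _y ∈ A, 2 * m x := Finset.sum_le_sum fun y _ => min_le_right _ _
    _ = (A.card : ℝ) * (2 * m x) := by rw [Finset.sum_const, nsmul_eq_mul]
  have key4 : ∀ x ∈ A, (A.card : ℝ) * w x ≤ 4 * A.card * m x + 4 * P + 2 * W := by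
    intro x _
    have hper : ∀ x' ∈ A, w x ≤ 4 * m x + 4 * m x' + 2 * w x' := by
      intro x' _
      have h1 : phiPt x S ≤ 2 * ‖x - x'‖ ^ 2 + 2 * phiPt x' S := phiPt_triangle hS x' x
      have h2 : w x ≤ min (2 * ‖x - x'‖ ^ 2) T + min (2 * phiPt x' S) T := by
        calc w x ≤ min (2 * ‖x - x'‖ ^ 2 + 2 * phiPt x' S) T :=
              min_le_min h1 (le_refl T)
        _ ≤ _ := min_add_le' hT (by positivity)
              (by nlinarith [phiPt_nonneg x' S])
      have h3 : min (2 * ‖x - x'‖ ^ 2) T ≤ 2 * min (‖x - x'‖ ^ 2) T := min_two_mul hT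
      have h4 : min (2 * phiPt x' S) T ≤ 2 * w x' := min_two_mul hT
      have h5 : min (‖x - x'‖ ^ 2) T ≤ 2 * m x' + 2 * m x := key1 x' x
      linarith
    calc (A.card : ℝ) * w x = ∑ _x' ∈ A, w x := by rw [Finset.sum_const, nsmul_eq_mul]
    _ ≤ ∑ x' ∈ A, (4 * m x + 4 * m x' + 2 * w x') := Finset.sum_le_sum hper
    _ = 4 * A.card * m x + 4 * P + 2 * W := by
        rw [Finset.sum_add_distrib, Finset.sum_add_distrib, Finset.sum_const,
          ← Finset.mul_sum, ← Finset.mul_sum, nsmul_eq_mul]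
        ring
  -- the middle bound : ∑ x, w x * Ex x ≤ 12 * P * W
  have hmid : ∑ x ∈ A, w x * Ex x ≤ 12 * P * W := by
    rcases A.eq_empty_or_nonempty with rfl | hA
    · simp; positivity
    have hcard : (0:ℝ) < A.card := by
      exact_mod_cast Finset.card_pos.mpr hA
    have hmul : (A.card : ℝ) * (∑ x ∈ A, w x * Ex x) ≤ (A.card : ℝ) * (12 * P * W) := by
      calc (A.card : ℝ) * (∑ x ∈ A, w x * Ex x) = ∑ x ∈ A, ((A.card : ℝ) * w x) * Ex x := by
            rw [Finset.mul_sum]; exact Finset.sum_congr rfl fun x _ => by ring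
      _ ≤ ∑ x ∈ A, (4 * A.card * m x * W + 4 * P * W + 2 * W * ((A.card:ℝ) * (2 * m x))) := by
          refine Finset.sum_le_sum fun x hx => ?_
          have h1 : ((A.card : ℝ) * w x) * Ex x
              ≤ (4 * A.card * m x + 4 * P + 2 * W) * Ex x :=
            mul_le_mul_of_nonneg_right (key4 x hx) (hEx0 x)
          have h2 : (4 * A.card * m x) * Ex x ≤ 4 * A.card * m x * W :=
            mul_le_mul_of_nonneg_left (hExW x) (by positivity)
          have h3 : (4 * P) * Ex x ≤ 4 * P * W :=
            mul_le_mul_of_nonneg_left (hExW x) (by positivity)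
          have h4 : (2 * W) * Ex x ≤ 2 * W * ((A.card:ℝ) * (2 * m x)) :=
            mul_le_mul_of_nonneg_left (hExm x) (by positivity)
          nlinarith [hEx0 x]
      _ = (A.card : ℝ) * (12 * P * W) := by
          have hc : ∀ x ∈ A, 4 * (A.card:ℝ) * m x * W + 4 * P * W
              + 2 * W * ((A.card:ℝ) * (2 * m x))
              = (8 * (A.card:ℝ) * W) * m x + 4 * P * W := fun x _ => by ring
          rw [Finset.sum_congr rfl hc, Finset.sum_add_distrib, ← Finset.mul_sum,
            Finset.sum_const, nsmul_eq_mul, ← hP]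
          ring
    exact le_of_mul_le_mul_left hmul hcard
  calc ∑ x ∈ A, w x * (∑ y ∈ A, min (w y) (min (‖y - x‖ ^ 2) T))
      ≤ ∑ x ∈ A, w x * (Ex x + 2 * P) :=
        Finset.sum_le_sum fun x _ => mul_le_mul_of_nonneg_left (key2 x) (hw0 x)
  _ = (∑ x ∈ A, w x * Ex x) + 2 * P * W := by
      have hc : ∀ x ∈ A, w x * (Ex x + 2 * P)
          = w x * Ex x + (2 * P) * w x := fun x _ => by ring
      rw [Finset.sum_congr rfl hc, Finset.sum_add_distrib, ← Finset.mul_sum, ← hW]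
  _ ≤ 12 * P * W + 2 * P * W := by linarith
  _ = 14 * P * W := by ring
  _ ≤ 64 * R * W := by nlinarith

lemma algSet_zero {t : ℕ} (xs : Fin t → E d) : algSet xs 0 = ∅ := by
  simp [algSet]

lemma algSet_nonempty {t i : ℕ} (xs : Fin t → E d) (hi : 1 ≤ i) (ht : 1 ≤ t) :
    (algSet xs i).Nonempty := by
  refine ⟨xs ⟨0, ht⟩, ?_⟩
  simp only [algSet, Finset.mem_image]
  exact ⟨⟨0, ht⟩, by simp; omega, rfl⟩

lemma mem_algSet {t i : ℕ} (xs : Fin t → E d) {a : E d} :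
    a ∈ algSet xs i ↔ ∃ j : Fin t, (j : ℕ) < i ∧ xs j = a := by
  simp [algSet, Finset.mem_image, Finset.mem_filter]

lemma algSet_snoc_of_le {i m : ℕ} (ys : Fin i → E d) (x : E d) (hm : m ≤ i) :
    algSet (Fin.snoc ys x) m = algSet ys m := by
  ext a
  rw [mem_algSet, mem_algSet]
  constructor
  · rintro ⟨j, hj, rfl⟩
    have hji : (j : ℕ) < i := lt_of_lt_of_le hj hm
    refine ⟨⟨j, hji⟩, hj, ?_⟩
    simp only [Fin.snoc, hji, dif_pos]
    rfl
  · rintro ⟨j, hj, rfl⟩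
    refine ⟨Fin.castSucc j, hj, ?_⟩
    rw [Fin.snoc_castSucc]
lemma algSet_snoc_top {i : ℕ} (ys : Fin i → E d) (x : E d) :
    algSet (Fin.snoc ys x) (i + 1) = insert x (algSet ys i) := by
  ext a
  rw [mem_algSet, Finset.mem_insert, mem_algSet]
  constructor
  · rintro ⟨j, hj, rfl⟩
    rcases Fin.eq_castSucc_or_eq_last j with ⟨j', rfl⟩ | rfl
    · refine Or.inr ⟨j', j'.isLt, ?_⟩
      rw [Fin.snoc_castSucc]
    · exact Or.inl (by rw [Fin.snoc_last])
  · rintro (rfl | ⟨j, hj, rfl⟩)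
    · exact ⟨Fin.last i, by simp, Fin.snoc_last _ _⟩
    · exact ⟨Fin.castSucc j, lt_of_lt_of_le j.isLt (Nat.le_succ i), Fin.snoc_castSucc _ _ _⟩

lemma algWeight_snoc {i : ℕ}
    (q : Finset (E d) → E d → ℝ) (ys : Fin i → E d) (x : E d) :
    algWeight q (Fin.snoc ys x) = algWeight q ys * q (algSet ys i) x := by
  unfold algWeight
  rw [Fin.prod_univ_castSucc]
  congr 1
  · refine Finset.prod_congr rfl fun j _ => ?_
    rw [Fin.snoc_castSucc]
    congr 1
    exact algSet_snoc_of_le ys x (le_of_lt j.isLt)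
  · rw [Fin.snoc_last]
    congr 1
    have : ((Fin.last i : Fin (i+1)) : ℕ) = i := rfl
    rw [this, algSet_snoc_of_le ys x (le_refl i)]

noncomputable def thr {d : ℕ} (X : Finset (E d)) (z : ℕ) (η : ℝ) (S : Finset (E d)) : ℝ :=
  η * rho X S z / z

noncomputable def wgt {d : ℕ} (X : Finset (E d)) (z : ℕ) (η : ℝ) (S : Finset (E d))
    (x : E d) : ℝ := min (phiPt x S) (thr X z η S)

noncomputable def cst {d k : ℕ} (copt : Fin k → E d) (A : Fin k → Finset (E d))
    (j : Fin k) : ℝ := ∑ x ∈ A j, ‖x - copt j‖ ^ 2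

noncomputable def covS {d k : ℕ} (A : Fin k → Finset (E d)) (S : Finset (E d)) :
    Finset (Fin k) := Finset.univ.filter (fun j => (A j ∩ S).Nonempty)

noncomputable def uncovS {d k : ℕ} (A : Fin k → Finset (E d)) (S : Finset (E d)) :
    Finset (Fin k) := Finset.univ.filter (fun j => ¬ (A j ∩ S).Nonempty)

noncomputable def pot {d k : ℕ} (X : Finset (E d)) (z : ℕ) (η : ℝ) (copt : Fin k → E d)
    (A : Fin k → Finset (E d)) (S : Finset (E d)) : ℝ :=
  (∑ j ∈ covS A S, ∑ y ∈ A j, wgt X z η S y) + 64 * ∑ j ∈ uncovS A S, cst copt A j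

section facts
variable {k : ℕ} {X : Finset (E d)} {z : ℕ} {η : ℝ} {S S' : Finset (E d)}

lemma thr_nonneg (hη : 0 ≤ η) : 0 ≤ thr X z η S :=
  div_nonneg (mul_nonneg hη (rho_nonneg X S z)) (Nat.cast_nonneg z)

lemma thr_mono (hη : 0 ≤ η) (h : S ⊆ S') (hS : S.Nonempty) :
    thr X z η S' ≤ thr X z η S := by
  unfold thr
  rcases Nat.eq_zero_or_pos z with rfl | hz
  · simp
  · have hz' : (0:ℝ) < z := by exact_mod_cast hz
    exact (div_le_div_iff_of_pos_right hz').mpr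
      (mul_le_mul_of_nonneg_left (rho_mono X h hS z) hη)

lemma wgt_nonneg (hη : 0 ≤ η) (x : E d) : 0 ≤ wgt X z η S x :=
  le_min (phiPt_nonneg x S) (thr_nonneg hη)

lemma wgt_mono (hη : 0 ≤ η) (h : S ⊆ S') (hS : S.Nonempty) (x : E d) :
    wgt X z η S' x ≤ wgt X z η S x :=
  min_le_min (phiPt_mono h hS x) (thr_mono hη h hS)

lemma cst_nonneg (copt : Fin k → E d) (A : Fin k → Finset (E d)) (j : Fin k) :
    0 ≤ cst copt A j := Finset.sum_nonneg fun x _ => by positivity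

end facts

section step
variable {k : ℕ}

lemma cov_insert_iff (A : Fin k → Finset (E d)) (S : Finset (E d)) (x : E d) (j : Fin k) :
    (A j ∩ insert x S).Nonempty ↔ x ∈ A j ∨ (A j ∩ S).Nonempty := by
  constructor
  · rintro ⟨y, hy⟩
    rw [Finset.mem_inter, Finset.mem_insert] at hy
    rcases hy with ⟨hyA, rfl | hyS⟩
    · exact Or.inl hyA
    · exact Or.inr ⟨y, Finset.mem_inter.mpr ⟨hyA, hyS⟩⟩
  · rintro (hx | ⟨y, hy⟩)
    · exact ⟨x, Finset.mem_inter.mpr ⟨hx, Finset.mem_insert_self x S⟩⟩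
    · rw [Finset.mem_inter] at hy
      exact ⟨y, Finset.mem_inter.mpr ⟨hy.1, Finset.mem_insert_of_mem hy.2⟩⟩

lemma pot_insert_le (X : Finset (E d)) (z : ℕ) (η : ℝ) (hη : 1 ≤ η)
    (copt : Fin k → E d) (A : Fin k → Finset (E d))
    (S : Finset (E d)) (hS : S.Nonempty) (x : E d) :
    pot X z η copt A (insert x S) ≤ pot X z η copt A S +
      ∑ j ∈ (uncovS A S).filter (fun j => x ∈ A j),
        ((∑ y ∈ A j, min (wgt X z η S y) (min (‖y - x‖ ^ 2) (thr X z η S)))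
          - 64 * cst copt A j) := by
  have hη0 : (0:ℝ) ≤ η := le_trans zero_le_one hη
  set C := covS A S with hC
  set N := (uncovS A S).filter (fun j => x ∈ A j) with hN
  have hsub : S ⊆ insert x S := Finset.subset_insert x S
  have hCN : covS A (insert x S) = C ∪ N := by
    ext j
    simp only [covS, uncovS, hC, hN, Finset.mem_union, Finset.mem_filter,
      Finset.mem_univ, true_and, cov_insert_iff]
    tauto
  have hdisjCN : Disjoint C N := by
    rw [Finset.disjoint_left]
    intro j hj hj'
    simp only [hN, uncovS, Finset.mem_filter, Finset.mem_univ, true_and] at hj'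
    simp only [hC, covS, Finset.mem_filter, Finset.mem_univ, true_and] at hj
    exact hj'.1 hj
  have hNsub : N ⊆ uncovS A S := Finset.filter_subset _ _
  have huncov : uncovS A (insert x S) = (uncovS A S) \ N := by
    ext j
    simp only [uncovS, hN, Finset.mem_sdiff, Finset.mem_filter, Finset.mem_univ, true_and,
      cov_insert_iff]
    tauto
  have hsum2 : ∑ j ∈ uncovS A (insert x S), cst copt A j
      = ∑ j ∈ uncovS A S, cst copt A j - ∑ j ∈ N, cst copt A j := by
    rw [huncov, eq_sub_iff_add_eq, Finset.sum_sdiff hNsub]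
  have hf : ∑ j ∈ covS A (insert x S), ∑ y ∈ A j, wgt X z η (insert x S) y
      = (∑ j ∈ C, ∑ y ∈ A j, wgt X z η (insert x S) y)
        + ∑ j ∈ N, ∑ y ∈ A j, wgt X z η (insert x S) y := by
    rw [hCN, Finset.sum_union hdisjCN]
  have hold : ∑ j ∈ C, ∑ y ∈ A j, wgt X z η (insert x S) y
      ≤ ∑ j ∈ C, ∑ y ∈ A j, wgt X z η S y :=
    Finset.sum_le_sum fun j _ => Finset.sum_le_sum fun y _ => wgt_mono hη0 hsub hS y
  have hnew : ∀ j ∈ N, ∑ y ∈ A j, wgt X z η (insert x S) y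
      ≤ ∑ y ∈ A j, min (wgt X z η S y) (min (‖y - x‖ ^ 2) (thr X z η S)) := by
    intro j _
    refine Finset.sum_le_sum fun y _ => ?_
    refine le_min (wgt_mono hη0 hsub hS y) (le_min ?_ ?_)
    · exact le_trans (min_le_left _ _) (phiPt_le (Finset.mem_insert_self x S))
    · exact le_trans (min_le_right _ _) (thr_mono hη0 hsub hS)
  have hnew' : ∑ j ∈ N, ∑ y ∈ A j, wgt X z η (insert x S) y
      ≤ ∑ j ∈ N, ∑ y ∈ A j, min (wgt X z η S y) (min (‖y - x‖ ^ 2) (thr X z η S)) :=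
    Finset.sum_le_sum hnew
  have hexp : ∑ j ∈ N, ((∑ y ∈ A j, min (wgt X z η S y) (min (‖y - x‖ ^ 2) (thr X z η S)))
        - 64 * cst copt A j)
      = (∑ j ∈ N, ∑ y ∈ A j, min (wgt X z η S y) (min (‖y - x‖ ^ 2) (thr X z η S)))
        - 64 * ∑ j ∈ N, cst copt A j := by
    rw [Finset.sum_sub_distrib, Finset.mul_sum]
  unfold pot
  rw [hf, hsum2]
  rw [← hC, ← hN] at *
  linarith
end step

section step2
variable {k : ℕ}

lemma condLemma (X : Finset (E d)) (z : ℕ) (η : ℝ) (hη : 1 ≤ η)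
    (copt : Fin k → E d) (A : Fin k → Finset (E d)) (hA : ∀ j, A j ⊆ X)
    (q : Finset (E d) → E d → ℝ) (hq : IsAlg1Kernel X z η q)
    (S : Finset (E d)) (hS : S.Nonempty) (j : Fin k) :
    ∑ x ∈ A j, q S x *
        ((∑ y ∈ A j, min (wgt X z η S y) (min (‖y - x‖ ^ 2) (thr X z η S)))
          - 64 * cst copt A j) ≤ 0 := by
  have hη0 : (0:ℝ) ≤ η := le_trans zero_le_one hη
  have hq0 := hq.1
  have key : ∑ x ∈ A j, q S x *
      (∑ y ∈ A j, min (wgt X z η S y) (min (‖y - x‖ ^ 2) (thr X z η S)))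
      ≤ 64 * cst copt A j * ∑ x ∈ A j, q S x := by
    rcases eq_or_lt_of_le (rho_nonneg X S z) with hrho | hrho
    · -- rho = 0 : threshold is 0, all the u-terms vanish
      have hthr : thr X z η S = 0 := by
        unfold thr; rw [← hrho]; simp
      have hu : ∀ x y : E d, min (wgt X z η S y) (min (‖y - x‖ ^ 2) (thr X z η S)) = 0 := by
        intro x y
        rw [hthr]
        have h1 : min (‖y - x‖ ^ 2) (0:ℝ) = 0 := min_eq_right (by positivity)
        rw [h1]
        exact min_eq_right (wgt_nonneg hη0 y)
      have : ∀ x ∈ A j, q S x *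
          (∑ y ∈ A j, min (wgt X z η S y) (min (‖y - x‖ ^ 2) (thr X z η S))) = 0 := by
        intro x _
        rw [Finset.sum_congr rfl fun y _ => hu x y]
        simp
      rw [Finset.sum_congr rfl this, Finset.sum_const_zero]
      have h64 : (0:ℝ) ≤ 64 * cst copt A j := by
        have := cst_nonneg copt A j; linarith
      exact mul_nonneg h64 (Finset.sum_nonneg fun x _ => hq0 S x)
    · -- rho > 0 : q is thresholded D² sampling
      set Z := ∑ y ∈ X, min (phiPt y S) (η * rho X S z / z) with hZ
      have hqf : ∀ x ∈ A j, q S x = wgt X z η S x / Z := by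
        intro x hx
        rw [hq.2.2.2 S hS hrho x (hA j hx)]
        rfl
      have hZ0 : 0 ≤ Z :=
        Finset.sum_nonneg fun y _ => le_min (phiPt_nonneg y S) (by
          have := thr_nonneg (X := X) (z := z) (S := S) hη0; unfold thr at this; exact this)
      have e1 : ∑ x ∈ A j, q S x *
          (∑ y ∈ A j, min (wgt X z η S y) (min (‖y - x‖ ^ 2) (thr X z η S)))
          = ∑ x ∈ A j, (wgt X z η S x / Z) *
            (∑ y ∈ A j, min (wgt X z η S y) (min (‖y - x‖ ^ 2) (thr X z η S))) :=
        Finset.sum_congr rfl fun x hx => by rw [hqf x hx]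
      have e2 : ∑ x ∈ A j, q S x = ∑ x ∈ A j, wgt X z η S x / Z :=
        Finset.sum_congr rfl fun x hx => hqf x hx
      rw [e1, e2]
      rcases eq_or_lt_of_le hZ0 with hZz | hZpos
      · rw [← hZz]
        simp
      · have hcluster := clusterLemma (A := A j) hS (copt j)
          (thr_nonneg (X := X) (z := z) (S := S) (η := η) hη0)
        have hldiv : ∑ x ∈ A j, wgt X z η S x / Z *
            (∑ y ∈ A j, min (wgt X z η S y) (min (‖y - x‖ ^ 2) (thr X z η S)))
            = (∑ x ∈ A j, wgt X z η S x *
               (∑ y ∈ A j, min (wgt X z η S y) (min (‖y - x‖ ^ 2) (thr X z η S)))) / Z := by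
          rw [Finset.sum_div]
          exact Finset.sum_congr rfl fun x _ => by ring
        have hrdiv : 64 * cst copt A j * ∑ x ∈ A j, wgt X z η S x / Z
            = (64 * cst copt A j * ∑ x ∈ A j, wgt X z η S x) / Z := by
          rw [← Finset.sum_div]; ring
        rw [hldiv, hrdiv]
        apply (div_le_div_iff_of_pos_right hZpos).mpr
        exact hcluster
  have hexp : ∑ x ∈ A j, q S x *
      ((∑ y ∈ A j, min (wgt X z η S y) (min (‖y - x‖ ^ 2) (thr X z η S)))
        - 64 * cst copt A j)
      = (∑ x ∈ A j, q S x *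
          (∑ y ∈ A j, min (wgt X z η S y) (min (‖y - x‖ ^ 2) (thr X z η S))))
        - 64 * cst copt A j * ∑ x ∈ A j, q S x := by
    calc ∑ x ∈ A j, q S x *
        ((∑ y ∈ A j, min (wgt X z η S y) (min (‖y - x‖ ^ 2) (thr X z η S)))
          - 64 * cst copt A j)
        = ∑ x ∈ A j, (q S x *
            (∑ y ∈ A j, min (wgt X z η S y) (min (‖y - x‖ ^ 2) (thr X z η S)))
          - 64 * cst copt A j * q S x) := Finset.sum_congr rfl fun x _ => by ring
    _ = _ := by rw [Finset.sum_sub_distrib, ← Finset.mul_sum]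
  rw [hexp]
  linarith

lemma stepLemma (X : Finset (E d)) (z : ℕ) (η : ℝ) (hη : 1 ≤ η)
    (copt : Fin k → E d) (A : Fin k → Finset (E d)) (hA : ∀ j, A j ⊆ X)
    (q : Finset (E d) → E d → ℝ) (hq : IsAlg1Kernel X z η q)
    (S : Finset (E d)) (hS : S.Nonempty) :
    ∑ x ∈ X, q S x * pot X z η copt A (insert x S) ≤ pot X z η copt A S := by
  have hq0 := hq.1
  have step1 : ∑ x ∈ X, q S x * pot X z η copt A (insert x S)
      ≤ ∑ x ∈ X, q S x * (pot X z η copt A S +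
          ∑ j ∈ (uncovS A S).filter (fun j => x ∈ A j),
            ((∑ y ∈ A j, min (wgt X z η S y) (min (‖y - x‖ ^ 2) (thr X z η S)))
              - 64 * cst copt A j)) :=
    Finset.sum_le_sum fun x _ => mul_le_mul_of_nonneg_left
      (pot_insert_le X z η hη copt A S hS x) (hq0 S x)
  have step2 : ∑ x ∈ X, q S x * (pot X z η copt A S +
          ∑ j ∈ (uncovS A S).filter (fun j => x ∈ A j),
            ((∑ y ∈ A j, min (wgt X z η S y) (min (‖y - x‖ ^ 2) (thr X z η S)))
              - 64 * cst copt A j))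
      = pot X z η copt A S + ∑ x ∈ X, q S x *
          ∑ j ∈ (uncovS A S).filter (fun j => x ∈ A j),
            ((∑ y ∈ A j, min (wgt X z η S y) (min (‖y - x‖ ^ 2) (thr X z η S)))
              - 64 * cst copt A j) := by
    rw [Finset.sum_congr rfl (fun x _ => mul_add (q S x) _ _), Finset.sum_add_distrib,
      ← Finset.sum_mul, hq.2.1 S, one_mul]
  -- the correction term is nonpositive
  have step3 : ∑ x ∈ X, q S x *
      ∑ j ∈ (uncovS A S).filter (fun j => x ∈ A j),
        ((∑ y ∈ A j, min (wgt X z η S y) (min (‖y - x‖ ^ 2) (thr X z η S)))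
          - 64 * cst copt A j) ≤ 0 := by
    set g : E d → Fin k → ℝ := fun x j => q S x *
      ((∑ y ∈ A j, min (wgt X z η S y) (min (‖y - x‖ ^ 2) (thr X z η S)))
        - 64 * cst copt A j) with hg
    have hrw : ∀ x ∈ X, q S x *
        ∑ j ∈ (uncovS A S).filter (fun j => x ∈ A j),
          ((∑ y ∈ A j, min (wgt X z η S y) (min (‖y - x‖ ^ 2) (thr X z η S)))
            - 64 * cst copt A j)
        = ∑ j ∈ uncovS A S, if x ∈ A j then g x j else 0 := by
      intro x _
      rw [Finset.mul_sum, Finset.sum_filter]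
    rw [Finset.sum_congr rfl hrw, Finset.sum_comm]
    apply Finset.sum_nonpos
    intro j _
    have hXf : X.filter (fun x => x ∈ A j) = A j := by
      ext x
      simp only [Finset.mem_filter]
      exact ⟨fun h => h.2, fun h => ⟨hA j h, h⟩⟩
    rw [← Finset.sum_filter, hXf]
    exact condLemma X z η hη copt A hA q hq S hS j
  linarith
end step2

section main
variable {k : ℕ}

lemma inter_singleton_nonempty_iff {A : Finset (E d)} {x : E d} :
    (A ∩ {x}).Nonempty ↔ x ∈ A := by
  constructor
  · rintro ⟨y, hy⟩
    rw [Finset.mem_inter, Finset.mem_singleton] at hy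
    rcases hy with ⟨h1, rfl⟩; exact h1
  · intro h
    exact ⟨x, Finset.mem_inter.mpr ⟨h, Finset.mem_singleton_self x⟩⟩

lemma baseLemma (X : Finset (E d)) (z : ℕ) (η : ℝ) (hη : 1 ≤ η)
    (copt : Fin k → E d) (A : Fin k → Finset (E d)) (hA : ∀ j, A j ⊆ X)
    (hn0 : 0 < X.card) :
    ∑ x ∈ X, (1 / (X.card : ℝ)) * pot X z η copt A {x}
      ≤ 64 * ∑ j : Fin k, cst copt A j := by
  have hη0 : (0:ℝ) ≤ η := le_trans zero_le_one hη
  set n : ℝ := (X.card : ℝ) with hn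
  have hnpos : (0:ℝ) < n := by rw [hn]; exact_mod_cast hn0
  have hfj : ∀ j : Fin k, ∀ x : E d, x ∈ A j →
      ∑ y ∈ A j, wgt X z η {x} y ≤ 2 * cst copt A j
        + 2 * (A j).card * ‖x - copt j‖ ^ 2 := by
    intro j x _
    have h1 : ∀ y ∈ A j, wgt X z η {x} y
        ≤ 2 * ‖y - copt j‖ ^ 2 + 2 * ‖x - copt j‖ ^ 2 := by
      intro y _
      calc wgt X z η {x} y ≤ phiPt y {x} := min_le_left _ _
      _ ≤ ‖y - x‖ ^ 2 := phiPt_le (Finset.mem_singleton_self x)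
      _ ≤ 2 * ‖y - copt j‖ ^ 2 + 2 * ‖copt j - x‖ ^ 2 := sq_norm_triangle y x (copt j)
      _ = 2 * ‖y - copt j‖ ^ 2 + 2 * ‖x - copt j‖ ^ 2 := by rw [norm_sub_rev (copt j) x]
    calc ∑ y ∈ A j, wgt X z η {x} y
        ≤ ∑ y ∈ A j, (2 * ‖y - copt j‖ ^ 2 + 2 * ‖x - copt j‖ ^ 2) :=
          Finset.sum_le_sum h1
    _ = 2 * cst copt A j + 2 * (A j).card * ‖x - copt j‖ ^ 2 := by
        rw [Finset.sum_add_distrib, Finset.sum_const, ← Finset.mul_sum, nsmul_eq_mul]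
        unfold cst; ring
  have htot : ∑ x ∈ X, pot X z η copt A {x} ≤ 64 * n * ∑ j : Fin k, cst copt A j := by
    have hpot : ∀ x ∈ X, pot X z η copt A {x}
        = (∑ j : Fin k, if x ∈ A j then ∑ y ∈ A j, wgt X z η {x} y else 0)
          + 64 * ∑ j : Fin k, (if x ∈ A j then 0 else cst copt A j) := by
      intro x _
      unfold pot covS uncovS
      congr 1
      · rw [Finset.sum_filter]
        exact Finset.sum_congr rfl fun j _ => by
          by_cases h : x ∈ A j <;> simp [h, inter_singleton_nonempty_iff]
      · congr 1
        rw [Finset.sum_filter]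
        exact Finset.sum_congr rfl fun j _ => by
          by_cases h : x ∈ A j <;> simp [h, inter_singleton_nonempty_iff]
    rw [Finset.sum_congr rfl hpot]
    have e3 : ∑ x ∈ X, (∑ j : Fin k, if x ∈ A j then ∑ y ∈ A j, wgt X z η {x} y else 0)
        = ∑ j : Fin k, ∑ x ∈ X, (if x ∈ A j then ∑ y ∈ A j, wgt X z η {x} y else 0) :=
      Finset.sum_comm
    have e4 : ∑ x ∈ X, 64 * ∑ j : Fin k, (if x ∈ A j then 0 else cst copt A j)
        = 64 * ∑ j : Fin k, ∑ x ∈ X, (if x ∈ A j then 0 else cst copt A j) := by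
      rw [← Finset.mul_sum]
      congr 1
      exact Finset.sum_comm
    rw [Finset.sum_add_distrib, e3, e4]
    have hterm1 : ∀ j : Fin k,
        ∑ x ∈ X, (if x ∈ A j then ∑ y ∈ A j, wgt X z η {x} y else 0)
        ≤ 4 * (A j).card * cst copt A j := by
      intro j
      rw [← Finset.sum_filter]
      have hXf : X.filter (fun x => x ∈ A j) = A j := by
        ext x
        simp only [Finset.mem_filter]
        exact ⟨fun h => h.2, fun h => ⟨hA j h, h⟩⟩
      rw [hXf]
      calc ∑ x ∈ A j, ∑ y ∈ A j, wgt X z η {x} y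
          ≤ ∑ x ∈ A j, (2 * cst copt A j + 2 * (A j).card * ‖x - copt j‖ ^ 2) :=
            Finset.sum_le_sum fun x hx => hfj j x hx
      _ = 4 * (A j).card * cst copt A j := by
          rw [Finset.sum_add_distrib, Finset.sum_const, ← Finset.mul_sum, nsmul_eq_mul]
          unfold cst; ring
    have hterm2 : ∀ j : Fin k,
        ∑ x ∈ X, (if x ∈ A j then 0 else cst copt A j)
          = (n - ((A j).card : ℝ)) * cst copt A j := by
      intro j
      have h1 : ∀ x ∈ X, (if x ∈ A j then 0 else cst copt A j)
          = (if x ∉ A j then cst copt A j else 0) := fun x _ => by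
        by_cases h : x ∈ A j <;> simp [h]
      rw [Finset.sum_congr rfl h1, ← Finset.sum_filter]
      have h2 : X.filter (fun x => x ∉ A j) = X \ A j := by
        ext x
        simp [Finset.mem_sdiff, Finset.mem_filter]
      rw [h2, Finset.sum_const, nsmul_eq_mul, Finset.card_sdiff_of_subset (hA j)]
      rw [Nat.cast_sub (Finset.card_le_card (hA j))]
    have hcard : ∀ j : Fin k, ((A j).card : ℝ) ≤ n := by
      intro j
      rw [hn]
      exact_mod_cast Finset.card_le_card (hA j)
    have hperj : ∀ j ∈ (Finset.univ : Finset (Fin k)),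
        (∑ x ∈ X, (if x ∈ A j then ∑ y ∈ A j, wgt X z η {x} y else 0))
          + 64 * ∑ x ∈ X, (if x ∈ A j then 0 else cst copt A j)
        ≤ 64 * n * cst copt A j := by
      intro j _
      rw [hterm2 j]
      have h3 := hterm1 j
      have h4 := cst_nonneg copt A j
      have h5 : (0:ℝ) ≤ ((A j).card : ℝ) := Nat.cast_nonneg _
      nlinarith [hcard j]
    calc (∑ j : Fin k, ∑ x ∈ X, (if x ∈ A j then ∑ y ∈ A j, wgt X z η {x} y else 0))
        + 64 * ∑ j : Fin k, ∑ x ∈ X, (if x ∈ A j then 0 else cst copt A j)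
        = ∑ j : Fin k, ((∑ x ∈ X, (if x ∈ A j then ∑ y ∈ A j, wgt X z η {x} y else 0))
            + 64 * ∑ x ∈ X, (if x ∈ A j then 0 else cst copt A j)) := by
          rw [Finset.sum_add_distrib, ← Finset.mul_sum]
    _ ≤ ∑ j : Fin k, 64 * n * cst copt A j := Finset.sum_le_sum hperj
    _ = 64 * n * ∑ j : Fin k, cst copt A j := by rw [← Finset.mul_sum]
  rw [← Finset.mul_sum]
  have hmain := mul_le_mul_of_nonneg_left htot (le_of_lt (one_div_pos.mpr hnpos))
  calc 1 / n * ∑ x ∈ X, pot X z η copt A {x}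
      ≤ 1 / n * (64 * n * ∑ j : Fin k, cst copt A j) := hmain
  _ = 64 * ∑ j : Fin k, cst copt A j := by
      field_simp

end main

section exp
variable {k : ℕ}

lemma algWeight_nonneg {t : ℕ} (q : Finset (E d) → E d → ℝ)
    (hq0 : ∀ S x, 0 ≤ q S x) (xs : Fin t → E d) : 0 ≤ algWeight q xs :=
  Finset.prod_nonneg fun i _ => hq0 _ _

lemma algSet_one (xs : Fin 1 → E d) : algSet xs 1 = {xs 0} := by
  ext a
  rw [mem_algSet, Finset.mem_singleton]
  constructor
  · rintro ⟨j, hj, rfl⟩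
    rw [Subsingleton.elim j 0]
  · rintro rfl
    exact ⟨0, Nat.zero_lt_one, rfl⟩

def snocEquivFun (β : Type*) (i : ℕ) : ((Fin i → β) × β) ≃ (Fin (i+1) → β) where
  toFun p := Fin.snoc p.1 p.2
  invFun g := (Fin.init g, g (Fin.last i))
  left_inv p := by simp
  right_inv g := by simp

lemma coe_snoc {β γ : Type*} {i : ℕ} (g : β → γ) (ys : Fin i → β) (x : β) :
    (fun j : Fin (i+1) => g (Fin.snoc (α := fun _ => β) ys x j))
      = Fin.snoc (α := fun _ => γ) (fun j => g (ys j)) (g x) := by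
  funext j
  rcases Fin.eq_castSucc_or_eq_last j with ⟨j', rfl⟩ | rfl <;> simp

lemma expLemma (X : Finset (E d)) (z : ℕ) (η : ℝ) (hη : 1 ≤ η)
    (copt : Fin k → E d) (A : Fin k → Finset (E d)) (hA : ∀ j, A j ⊆ X)
    (q : Finset (E d) → E d → ℝ) (hq : IsAlg1Kernel X z η q)
    (hn0 : 0 < X.card) :
    ∀ i : ℕ, 1 ≤ i →
      ∑ xs : Fin i → {x // x ∈ X},
        algWeight q (fun j => (xs j : E d)) *
          pot X z η copt A (algSet (fun j => (xs j : E d)) i)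
      ≤ 64 * ∑ j : Fin k, cst copt A j := by
  intro i hi
  induction i with
  | zero => omega
  | succ i ih =>
    rcases Nat.eq_zero_or_pos i with rfl | hi1
    · -- base case : one step, uniform sampling
      have h1 : ∀ xs : Fin 1 → {x // x ∈ X},
          algWeight q (fun j => (xs j : E d)) *
            pot X z η copt A (algSet (fun j => (xs j : E d)) 1)
          = (1 / (X.card : ℝ)) * pot X z η copt A {(xs 0 : E d)} := by
        intro xs
        have hw : algWeight q (fun j => (xs j : E d)) = q ∅ (xs 0 : E d) := by
          unfold algWeight
          rw [Fin.prod_univ_one]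
          norm_num [algSet_zero]
        rw [hw, hq.2.2.1 (xs 0 : E d) (xs 0).2, algSet_one]
      rw [Finset.sum_congr rfl fun xs _ => h1 xs]
      have h2 : ∑ xs : Fin 1 → {x // x ∈ X},
          (1 / (X.card : ℝ)) * pot X z η copt A {(xs 0 : E d)}
          = ∑ v : {x // x ∈ X}, (1 / (X.card : ℝ)) * pot X z η copt A {(v : E d)} :=
        Fintype.sum_equiv (Equiv.funUnique (Fin 1) _)
          _ _ (fun xs => rfl)
      rw [h2, Finset.sum_coe_sort X
        (fun x => (1 / (X.card : ℝ)) * pot X z η copt A {x})]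
      exact baseLemma X z η hη copt A hA hn0
    · -- inductive step
      have hstep := ih hi1
      set ρtot := ∑ j : Fin k, cst copt A j with hρ
      set F : (Fin (i+1) → {x // x ∈ X}) → ℝ := fun xs =>
        algWeight q (fun j => (xs j : E d)) *
          pot X z η copt A (algSet (fun j => (xs j : E d)) (i+1)) with hF
      have hsum : ∑ xs : Fin (i+1) → {x // x ∈ X}, F xs
          = ∑ p : (Fin i → {x // x ∈ X}) × {x // x ∈ X},
              F (snocEquivFun _ i p) :=
        (Equiv.sum_comp (snocEquivFun _ i) F).symm
      rw [hsum, Fintype.sum_prod_type]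
      have hterm : ∀ (ys : Fin i → {x // x ∈ X}) (x : {x // x ∈ X}),
          F (snocEquivFun _ i (ys, x))
          = algWeight q (fun j => (ys j : E d)) *
              (q (algSet (fun j => (ys j : E d)) i) (x : E d) *
               pot X z η copt A
                 (insert (x : E d) (algSet (fun j => (ys j : E d)) i))) := by
        intro ys x
        have hc : (fun j : Fin (i+1) =>
              ((Fin.snoc (α := fun _ => {x // x ∈ X}) ys x j : {x // x ∈ X}) : E d))
            = Fin.snoc (α := fun _ => E d) (fun j => (ys j : E d)) (x : E d) :=
          coe_snoc _ ys x
        simp only [hF, snocEquivFun, Equiv.coe_fn_mk]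
        rw [hc, algWeight_snoc, algSet_snoc_top]
        ring
      have hinner : ∀ ys : Fin i → {x // x ∈ X},
          ∑ x : {x // x ∈ X},
            F (snocEquivFun _ i (ys, x))
          ≤ algWeight q (fun j => (ys j : E d)) *
              pot X z η copt A (algSet (fun j => (ys j : E d)) i) := by
        intro ys
        rw [Finset.sum_congr rfl fun x _ => hterm ys x]
        rw [← Finset.mul_sum]
        set S := algSet (fun j => (ys j : E d)) i with hS
        have hSne : S.Nonempty := algSet_nonempty _ hi1 hi1
        have hsub : ∑ x : {x // x ∈ X},
            q S (x : E d) * pot X z η copt A (insert (x : E d) S)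
            = ∑ x ∈ X, q S x * pot X z η copt A (insert x S) :=
          Finset.sum_coe_sort X (fun x => q S x * pot X z η copt A (insert x S))
        rw [hsub]
        exact mul_le_mul_of_nonneg_left
          (stepLemma X z η hη copt A hA q hq S hSne)
          (algWeight_nonneg q hq.1 _)
      calc ∑ ys : Fin i → {x // x ∈ X}, ∑ x : {x // x ∈ X},
            F (snocEquivFun _ i (ys, x))
          ≤ ∑ ys : Fin i → {x // x ∈ X},
              algWeight q (fun j => (ys j : E d)) *
                pot X z η copt A (algSet (fun j => (ys j : E d)) i) :=
            Finset.sum_le_sum fun ys _ => hinner ys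
      _ ≤ 64 * ρtot := hstep

end exp

/-- adapted from Lemma 9 of Bhaskara et al.. Fix an optimal solution of
`k`-means with `z` outliers on `X`: an inlier set `Y* ⊆ X` with `|Y*| = n − z`, partitioned
into clusters `A_1, …, A_k` (each point assigned to its nearest optimal center `copt j`),
achieving the optimal cost `ρ*`. Run Algorithm 1 for `i ≥ 1` steps and let `H_i` be the
union of the covered clusters, i.e. those `A_j` meeting the sampled set `S_i`. Then
`E[∑_{x ∈ H_i} min{φ_{{x}}(S_i), η·ρ_X(S_i)/z}] ≤ 64·ρ*`. -/
theorem stmt17 {d : ℕ} (X : Finset (EuclideanSpace ℝ (Fin d))) (n k z : ℕ)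
    (hn : X.card = n) (hk : 1 ≤ k) (hz1 : 1 ≤ z) (hz : z < n)
    (η : ℝ) (hη : 1 ≤ η)
    (q : Finset (EuclideanSpace ℝ (Fin d)) → EuclideanSpace ℝ (Fin d) → ℝ)
    (hq : IsAlg1Kernel X z η q)
    (copt : Fin k → EuclideanSpace ℝ (Fin d)) (hinj : Function.Injective copt)
    (A : Fin k → Finset (EuclideanSpace ℝ (Fin d)))
    (Ystar : Finset (EuclideanSpace ℝ (Fin d)))
    (hYunion : Finset.univ.biUnion A = Ystar)
    (hdisj : ∀ j j' : Fin k, j ≠ j' → Disjoint (A j) (A j'))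
    (hYsub : Ystar ⊆ X) (hYcard : Ystar.card = n - z)
    (hnear : ∀ j : Fin k, ∀ x ∈ A j,
      ‖x - copt j‖ ^ 2 = phiPt x (Finset.univ.image copt))
    (hopt : ∑ j : Fin k, ∑ x ∈ A j, ‖x - copt j‖ ^ 2 = optCost X k z) :
    ∀ i : ℕ, 1 ≤ i →
      ∑ xs : Fin i → {x // x ∈ X},
        algWeight q (fun j => (xs j : EuclideanSpace ℝ (Fin d))) *
          ∑ x ∈ Finset.univ.biUnion (fun j : Fin k =>
              if (A j ∩ algSet (fun j' => (xs j' : EuclideanSpace ℝ (Fin d))) i).Nonempty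
              then A j else ∅),
            min (phiPt x (algSet (fun j' => (xs j' : EuclideanSpace ℝ (Fin d))) i))
              (η * rho X (algSet (fun j' => (xs j' : EuclideanSpace ℝ (Fin d))) i) z / z)
      ≤ 64 * optCost X k z := by
  intro i hi
  have hA : ∀ j, A j ⊆ X := fun j =>
    (hYunion ▸ Finset.subset_biUnion_of_mem A (Finset.mem_univ j)).trans hYsub
  have hn0 : 0 < X.card := by omega
  have hρ : ∑ j : Fin k, cst copt A j = optCost X k z := hopt
  -- the inner sum is the f-part of the potential
  have hinner : ∀ S : Finset (EuclideanSpace ℝ (Fin d)),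
      ∑ x ∈ Finset.univ.biUnion (fun j : Fin k =>
          if (A j ∩ S).Nonempty then A j else ∅),
        min (phiPt x S) (η * rho X S z / z)
      = ∑ j ∈ covS A S, ∑ x ∈ A j, wgt X z η S x := by
    intro S
    have hpd : Set.PairwiseDisjoint ((Finset.univ : Finset (Fin k)) : Set (Fin k))
        (fun j : Fin k => if (A j ∩ S).Nonempty then A j else ∅) := by
      intro j _ j' _ hne
      by_cases h1 : (A j ∩ S).Nonempty <;> by_cases h2 : (A j' ∩ S).Nonempty <;>
        simp only [Function.onFun, h1, h2, if_true, if_false] <;>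
        first
          | exact hdisj j j' hne
          | exact Finset.disjoint_empty_right _
          | exact Finset.disjoint_empty_left _
    rw [Finset.sum_biUnion hpd]
    have h3 : ∀ j ∈ (Finset.univ : Finset (Fin k)),
        ∑ x ∈ (if (A j ∩ S).Nonempty then A j else ∅),
          min (phiPt x S) (η * rho X S z / z)
        = (if (A j ∩ S).Nonempty then ∑ x ∈ A j, wgt X z η S x else 0) := by
      intro j _
      by_cases h : (A j ∩ S).Nonempty <;> simp only [h, if_true, if_false]
      · rfl
      · simp
    rw [Finset.sum_congr rfl h3, ← Finset.sum_filter]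
    rfl
  have hfle : ∀ S : Finset (EuclideanSpace ℝ (Fin d)),
      ∑ j ∈ covS A S, ∑ x ∈ A j, wgt X z η S x ≤ pot X z η copt A S := by
    intro S
    unfold pot
    have : 0 ≤ 64 * ∑ j ∈ uncovS A S, cst copt A j := by
      have := Finset.sum_nonneg (s := uncovS A S) fun j _ => cst_nonneg copt A j
      linarith
    linarith
  calc ∑ xs : Fin i → {x // x ∈ X},
        algWeight q (fun j => (xs j : EuclideanSpace ℝ (Fin d))) *
          ∑ x ∈ Finset.univ.biUnion (fun j : Fin k =>
              if (A j ∩ algSet (fun j' => (xs j' : EuclideanSpace ℝ (Fin d))) i).Nonempty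
              then A j else ∅),
            min (phiPt x (algSet (fun j' => (xs j' : EuclideanSpace ℝ (Fin d))) i))
              (η * rho X (algSet (fun j' => (xs j' : EuclideanSpace ℝ (Fin d))) i) z / z)
      ≤ ∑ xs : Fin i → {x // x ∈ X},
          algWeight q (fun j => (xs j : EuclideanSpace ℝ (Fin d))) *
            pot X z η copt A (algSet (fun j => (xs j : EuclideanSpace ℝ (Fin d))) i) := by
        refine Finset.sum_le_sum fun xs _ => ?_
        rw [hinner]
        exact mul_le_mul_of_nonneg_left (hfle _) (algWeight_nonneg q hq.1 _)
  _ ≤ 64 * ∑ j : Fin k, cst copt A j :=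
        expLemma X z η hη copt A hA q hq hn0 i hi
  _ = 64 * optCost X k z := by rw [hρ]
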